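/- Let 0 < μ < λ and ν > 0, set a = λ − μ, r = ν/λ and β(t) = λ·(e^{a t} − 1)/(λ·e^{a t} − μ). Define the mean m(t) = (ν/a)·(e^{a t} − 1) and the variance σ²(t) = ν·(λ·e^{a t} − μ)·(e^{a t} − 1)/a². Then for every t > 0, the coefficient of variation satisfies √(σ²(t))/m(t) = 1/√(r·β(t)), and moreover √(σ²(t))/m(t) > √(λ/ν). -/

import Mathlib

/-- The coefficient of variation of the BDI process: with `0 < μ < λ`, `ν > 0`,
`a = λ − μ`, `r = ν/λ`, `β(t) = λ(e^{at}−1)/(λe^{at}−μ)`, mean `m(t) = (ν/a)(e^{at}−1)`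
and variance `σ²(t) = ν(λe^{at}−μ)(e^{at}−1)/a²`, for every `t > 0` one has
`√(σ²(t))/m(t) = 1/√(r·β(t))` and `√(σ²(t))/m(t) > √(λ/ν)`. -/
theorem stmt_15 (lam mu nu a r : ℝ) (hmu : 0 < mu) (hml : mu < lam) (hnu : 0 < nu)
    (ha : a = lam - mu) (hr : r = nu / lam) (beta m sigma2 : ℝ → ℝ)
    (hbeta : ∀ t : ℝ, beta t =
      lam * (Real.exp (a * t) - 1) / (lam * Real.exp (a * t) - mu))
    (hm : ∀ t : ℝ, m t = (nu / a) * (Real.exp (a * t) - 1))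
    (hsigma2 : ∀ t : ℝ, sigma2 t =
      nu * (lam * Real.exp (a * t) - mu) * (Real.exp (a * t) - 1) / a ^ 2) :
    ∀ t : ℝ, 0 < t →
      Real.sqrt (sigma2 t) / m t = 1 / Real.sqrt (r * beta t) ∧
      Real.sqrt (sigma2 t) / m t > Real.sqrt (lam / nu) := by
  intro t ht
  have ha0 : 0 < a := by rw [ha]; linarith
  have hlam : 0 < lam := lt_trans hmu hml
  set E := Real.exp (a * t) with hE
  have hE1 : 1 < E := by
    rw [hE]
    exact Real.one_lt_exp_iff.mpr (by positivity)
  have hD : 0 < lam * E - mu := by nlinarith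
  have hE1' : 0 < E - 1 := by linarith
  have hm_pos : 0 < m t := by rw [hm]; positivity
  have hs2 : 0 < sigma2 t := by rw [hsigma2]; positivity
  -- the key identity: CV² = (λE−μ)/(ν(E−1))
  have key : sigma2 t / (m t) ^ 2 = (lam * E - mu) / (nu * (E - 1)) := by
    rw [hsigma2, hm, ← hE]
    field_simp
  have hcv : Real.sqrt (sigma2 t) / m t = Real.sqrt (sigma2 t / (m t) ^ 2) := by
    rw [Real.sqrt_div hs2.le, Real.sqrt_sq hm_pos.le]
  have hrb : r * beta t = nu * (E - 1) / (lam * E - mu) := by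
    rw [hr, hbeta, ← hE]
    field_simp
  constructor
  · rw [hcv, key, hrb, one_div, ← Real.sqrt_inv]
    congr 1
    rw [inv_div]
  · rw [hcv, key]
    apply Real.sqrt_lt_sqrt (by positivity)
    rw [div_lt_div_iff₀ hnu (by positivity)]
    nlinarith
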